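/- Fix n ≥ 1, positive reals β₀, …, β_{n−1}, ρ > 0, μ₀ > 0, R₀ > 0. Suppose Φ, Ψ : ℝ → ℝ are continuous on [0,∞) and differentiable on (0,∞), with Φ(x) ≥ 0 on [0,∞), Φ′(x) < 0 on (0,∞), Φ(0) = 1, Φ(x) → 0 as x → ∞, Ψ(x) ≥ 0 on [0,∞), Ψ′(x) > 0 on (0,∞), Ψ(0) = 0, Ψ(x) → ∞ as x → ∞, and that the normalization condition Σ_{i=0}^{n−1} β_i · i! / (ρ + μ₀)^{i+1} = 1 holds. Then there exists a unique P* > 0 with R(P*) = 1 if and only if R₀ > 1, where R(x) = R₀ Φ(x) Σ_{i=0}^{n−1} β_i · i! / (ρ + μ₀ + Ψ(x))^{i+1}. -/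

import Mathlib

open Real Set Finset Filter

/-- Under the full set of assumptions (A1)-(A2) and the normalization
condition, there exists a unique non-trivial steady state `P* > 0` with `R(P*) = 1`
if and only if `R₀ > 1`. -/
theorem stmt_5 (n : ℕ) (hn : 1 ≤ n) (β : ℕ → ℝ) (hβ : ∀ i < n, 0 < β i)
    (ρ μ₀ R₀ : ℝ) (hρ : 0 < ρ) (hμ₀ : 0 < μ₀) (hR₀ : 0 < R₀)
    (Φ Ψ : ℝ → ℝ)
    (hΦc : ContinuousOn Φ (Set.Ici 0)) (hΦd : DifferentiableOn ℝ Φ (Set.Ioi 0))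
    (hΦpos : ∀ x ∈ Set.Ici (0 : ℝ), 0 ≤ Φ x) (hΦ' : ∀ x ∈ Set.Ioi (0 : ℝ), deriv Φ x < 0)
    (hΦ0 : Φ 0 = 1) (hΦlim : Tendsto Φ atTop (nhds 0))
    (hΨc : ContinuousOn Ψ (Set.Ici 0)) (hΨd : DifferentiableOn ℝ Ψ (Set.Ioi 0))
    (hΨpos : ∀ x ∈ Set.Ici (0 : ℝ), 0 ≤ Ψ x) (hΨ' : ∀ x ∈ Set.Ioi (0 : ℝ), 0 < deriv Ψ x)
    (hΨ0 : Ψ 0 = 0) (hΨlim : Tendsto Ψ atTop atTop)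
    (hnorm : ∑ i ∈ Finset.range n, β i * (Nat.factorial i) / (ρ + μ₀) ^ (i + 1) = 1) :
    (∃! P : ℝ, 0 < P ∧
        R₀ * Φ P * ∑ i ∈ Finset.range n, β i * (Nat.factorial i) / (ρ + μ₀ + Ψ P) ^ (i + 1)
          = 1)
      ↔ 1 < R₀ := by
  set S : ℝ → ℝ := fun x => ∑ i ∈ Finset.range n, β i * (Nat.factorial i) / (ρ + μ₀ + Ψ x) ^ (i + 1) with hSdef
  set f : ℝ → ℝ := fun x => R₀ * Φ x * S x with hfdef
  have hρμ : (0:ℝ) < ρ + μ₀ := by linarith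
  have hne : (Finset.range n).Nonempty := ⟨0, Finset.mem_range.mpr hn⟩
  have hd : ∀ x ∈ Set.Ici (0:ℝ), 0 < ρ + μ₀ + Ψ x := by
    intro x hx; have := hΨpos x hx; linarith
  -- S positive on Ici 0
  have hSpos : ∀ x ∈ Set.Ici (0:ℝ), 0 < S x := by
    intro x hx
    apply Finset.sum_pos _ hne
    intro i hi
    have hβi := hβ i (Finset.mem_range.mp hi)
    have : (0:ℝ) < (Nat.factorial i : ℝ) := by positivity
    exact div_pos (by positivity) (pow_pos (hd x hx) _)
  -- S ≤ 1 on Ici 0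
  have hSle : ∀ x ∈ Set.Ici (0:ℝ), S x ≤ 1 := by
    intro x hx
    rw [← hnorm]
    apply Finset.sum_le_sum
    intro i hi
    have hβi := hβ i (Finset.mem_range.mp hi)
    have h1 : (0:ℝ) ≤ β i * (Nat.factorial i) := by positivity
    have h2 : (ρ + μ₀) ^ (i+1) ≤ (ρ + μ₀ + Ψ x) ^ (i+1) := by
      apply pow_le_pow_left₀ hρμ.le
      have := hΨpos x hx; linarith
    exact div_le_div_of_nonneg_left h1 (pow_pos hρμ _) h2 |>.trans_eq rfl
    |>.trans (le_of_eq rfl)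
  -- Φ strictly anti, Ψ strictly mono
  have hΦanti : StrictAntiOn Φ (Set.Ici 0) := by
    apply strictAntiOn_of_deriv_neg (convex_Ici 0) hΦc
    intro x hx
    rw [interior_Ici] at hx
    exact hΦ' x hx
  have hΨmono : StrictMonoOn Ψ (Set.Ici 0) := by
    apply strictMonoOn_of_deriv_pos (convex_Ici 0) hΨc
    intro x hx
    rw [interior_Ici] at hx
    exact hΨ' x hx
  -- S strictly anti on Ici 0
  have hSanti : StrictAntiOn S (Set.Ici 0) := by
    intro a ha b hb hab
    apply Finset.sum_lt_sum_of_nonempty hne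
    intro i hi
    have hβi := hβ i (Finset.mem_range.mp hi)
    have hfac : (0:ℝ) < (Nat.factorial i : ℝ) := by positivity
    apply div_lt_div_of_pos_left (by positivity) (pow_pos (hd a ha) _)
    apply pow_lt_pow_left₀ _ (hd a ha).le (Nat.succ_ne_zero i)
    have := hΨmono ha hb hab
    linarith
  -- f strictly anti on Ici 0
  have hfanti : StrictAntiOn f (Set.Ici 0) := by
    intro a ha b hb hab
    have h1 : Φ b < Φ a := hΦanti ha hb hab
    have h2 : S b < S a := hSanti ha hb hab
    have h3 : 0 ≤ Φ b := hΦpos b hb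
    have h4 : 0 < S b := hSpos b hb
    have h5 : 0 < S a := hSpos a ha
    have : Φ b * S b < Φ a * S a := by nlinarith
    simp only [hfdef]
    have := mul_lt_mul_of_pos_left this hR₀
    linarith [this]
  have hf0 : f 0 = R₀ := by
    simp only [hfdef, hSdef, hΦ0, hΨ0, add_zero, hnorm, mul_one]
  -- continuity of f on Ici 0
  have hScont : ContinuousOn S (Set.Ici 0) := by
    apply continuousOn_finset_sum
    intro i hi
    apply ContinuousOn.div continuousOn_const
    · exact (continuousOn_const.add hΨc).pow _
    · intro x hx
      exact ne_of_gt (pow_pos (hd x hx) _)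
  have hfcont : ContinuousOn f (Set.Ici 0) :=
    (continuousOn_const.mul hΦc).mul hScont
  constructor
  · rintro ⟨P, ⟨hP, hfP⟩, -⟩
    have : f P < f 0 := hfanti (le_refl (0:ℝ)) (le_of_lt hP) hP
    rw [hf0] at this
    have hfP' : f P = 1 := hfP
    linarith
  · intro hR1
    -- find M with f M < 1
    have hinv : (0:ℝ) < 1 / R₀ := by positivity
    obtain ⟨M, hΦM, hM1⟩ := ((hΦlim.eventually_lt_const hinv).and (eventually_ge_atTop (1:ℝ))).exists
    have hM0 : (0:ℝ) ≤ M := by linarith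
    have hfM : f M < 1 := by
      have h1 : 0 ≤ Φ M := hΦpos M hM0
      have h2 : S M ≤ 1 := hSle M hM0
      have h3 : 0 < S M := hSpos M hM0
      have h4 : R₀ * Φ M * S M ≤ R₀ * Φ M := by nlinarith [mul_nonneg hR₀.le h1]
      have h5 : R₀ * Φ M < 1 := by
        calc R₀ * Φ M < R₀ * (1 / R₀) := mul_lt_mul_of_pos_left hΦM hR₀
          _ = 1 := by field_simp
      calc f M = R₀ * Φ M * S M := rfl
        _ ≤ R₀ * Φ M := h4
        _ < 1 := h5
    -- IVT
    have hsub : Set.Icc (0:ℝ) M ⊆ Set.Ici 0 := Set.Icc_subset_Ici_self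
    have hivt := intermediate_value_Ioo' (le_trans zero_le_one hM1 : (0:ℝ) ≤ M) (hfcont.mono hsub)
    have h1mem : (1:ℝ) ∈ Set.Ioo (f M) (f 0) := by
      rw [hf0]; exact ⟨hfM, hR1⟩
    obtain ⟨P, hPmem, hfPeq⟩ := hivt h1mem
    refine ⟨P, ⟨hPmem.1, hfPeq⟩, ?_⟩
    rintro Q ⟨hQ, hfQ⟩
    have hPI : P ∈ Set.Ici (0:ℝ) := le_of_lt hPmem.1
    have hQI : Q ∈ Set.Ici (0:ℝ) := le_of_lt hQ
    have : f Q = f P := by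
      show R₀ * Φ Q * S Q = R₀ * Φ P * S P
      rw [hfQ]; exact hfPeq.symm ▸ rfl
    exact hfanti.injOn hQI hPI this
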